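/- arXiv:1709.01345 — 2 statements merged into one kernel-verified Lean document; each statement's English description precedes it below -/
import Mathlib

section
/- The map A ↦ Φ(A), sending a subset A ⊆ ℕ to the subnearring of (ℤ[x], +, ∘) generated by {x^(2^(i+1)−2) : i ∈ A}, satisfies Φ(A) ⊆ Φ(B) if and only if A ⊆ B. In particular Φ is injective, and hence (ℤ[x], +, ∘) has exactly 2^ℵ₀ subnearrings. -/
open Polynomial

/-- Membership in the subnearring of `(ℤ[x], +, ∘)` generated by `S`:
the smallest subset of `ℤ[x]` containing `S` that is an additive subgroup
and is closed under composition of polynomials. -/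
inductive NRGen (S : Set (Polynomial ℤ)) : Polynomial ℤ → Prop
  | mem {p : Polynomial ℤ} : p ∈ S → NRGen S p
  | zero : NRGen S 0
  | add {p q : Polynomial ℤ} : NRGen S p → NRGen S q → NRGen S (p + q)
  | neg {p : Polynomial ℤ} : NRGen S p → NRGen S (-p)
  | comp {p q : Polynomial ℤ} : NRGen S p → NRGen S q → NRGen S (p.comp q)

/-- A subnearring of `(ℤ[x], +, ∘)`. -/
def IsSubNRPoly (T : Set (Polynomial ℤ)) : Prop :=
  (0 : Polynomial ℤ) ∈ T ∧ (∀ p ∈ T, ∀ q ∈ T, p + q ∈ T) ∧ (∀ p ∈ T, -p ∈ T) ∧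
    (∀ p ∈ T, ∀ q ∈ T, p.comp q ∈ T)

noncomputable def Phi (A : Set ℕ+) : Set (Polynomial ℤ) :=
  {p | NRGen {q : Polynomial ℤ | ∃ i ∈ A, q = X ^ (2 ^ ((i : ℕ) + 1) - 2)} p}

section Aux

local notation "R2" => ZMod 2

lemma sq_eq_expand (f : R2[X]) : f ^ 2 = expand R2 2 f := by
  have h := Polynomial.map_frobenius_expand 2 f
  rwa [ZMod.frobenius_zmod, Polynomial.map_id, eq_comm] at h

lemma even_support_expand (f : R2[X]) (h : ∀ e, f.coeff e ≠ 0 → 2 ∣ e) :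
    ∃ g, f = expand R2 2 g := by
  refine ⟨contract 2 f, ?_⟩
  ext n
  rw [coeff_expand (by norm_num)]
  split_ifs with hd
  · obtain ⟨k, rfl⟩ := hd
    rw [coeff_contract two_ne_zero, Nat.mul_div_cancel_left k (by norm_num), Nat.mul_comm]
  · by_contra hc
    exact hd (h n hc)

lemma comp_support_four (p q : R2[X]) (hp : ∀ e, p.coeff e ≠ 0 → 2 ∣ e)
    (hq : ∀ e, q.coeff e ≠ 0 → 2 ∣ e) :
    ∀ e, (p.comp q).coeff e ≠ 0 → 4 ∣ e := by
  obtain ⟨p₁, rfl⟩ := even_support_expand p hp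
  obtain ⟨q₁, rfl⟩ := even_support_expand q hq
  have key : (expand R2 2 p₁).comp (expand R2 2 q₁) = expand R2 4 (p₁.comp q₁) := by
    calc (expand R2 2 p₁).comp (expand R2 2 q₁)
        = (p₁.comp (X ^ 2)).comp (expand R2 2 q₁) := by rw [← expand_eq_comp_X_pow]
      _ = p₁.comp ((X ^ 2).comp (expand R2 2 q₁)) := comp_assoc _ _ _
      _ = p₁.comp ((expand R2 2 q₁) ^ 2) := by rw [X_pow_comp]
      _ = p₁.comp (expand R2 4 q₁) := by
            rw [sq_eq_expand, expand_expand]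
      _ = (p₁.comp q₁).comp (X ^ 4) := by
            rw [expand_eq_comp_X_pow (p := 4) (f := q₁), ← comp_assoc]
      _ = expand R2 4 (p₁.comp q₁) := (expand_eq_comp_X_pow 4).symm
  intro e he
  rw [key, coeff_expand (by norm_num)] at he
  split_ifs at he with hd
  · exact hd
  · exact absurd rfl he

end Aux

/-- The exponent attached to index `i`. -/
def dexp (i : ℕ) : ℕ := 2 ^ (i + 1) - 2

lemma dexp_strictMono : StrictMono dexp := by
  intro a b hab
  have h1 : (2 : ℕ) ^ (a + 1) < 2 ^ (b + 1) :=
    Nat.pow_lt_pow_right (by norm_num) (by omega)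
  have h2 : (2 : ℕ) ≤ 2 ^ (a + 1) := by
    calc (2 : ℕ) = 2 ^ 1 := rfl
      _ ≤ 2 ^ (a + 1) := Nat.pow_le_pow_right (by norm_num) (by omega)
  simp only [dexp]
  omega

lemma dexp_even (i : ℕ) : 2 ∣ dexp i := by
  have : 2 ∣ 2 ^ (i + 1) := dvd_pow_self 2 (by omega)
  exact Nat.dvd_sub this (dvd_refl 2)

lemma dexp_not_four (i : ℕ) (hi : 1 ≤ i) : ¬ (4 ∣ dexp i) := by
  obtain ⟨m, rfl⟩ : ∃ m, i = m + 1 := ⟨i - 1, by omega⟩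
  have h : 2 ^ (m + 1 + 1) = 4 * 2 ^ m := by ring
  have h1 : 1 ≤ 2 ^ m := Nat.one_le_two_pow
  simp only [dexp]
  omega

/-- Reduction of an integer polynomial mod 2. -/
noncomputable def red (p : Polynomial ℤ) : (ZMod 2)[X] := p.map (Int.castRingHom (ZMod 2))

/-- The invariant: all exponents with odd coefficient are even and differ from `dexp i`. -/
def Good (i : ℕ) (p : Polynomial ℤ) : Prop :=
  ∀ e, (red p).coeff e ≠ 0 → 2 ∣ e ∧ e ≠ dexp i

lemma good_of_nrgen {B : Set ℕ+} {i : ℕ+} (hiB : i ∉ B) {p : Polynomial ℤ}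
    (hp : NRGen {q : Polynomial ℤ | ∃ j ∈ B, q = X ^ (2 ^ ((j : ℕ) + 1) - 2)} p) :
    Good (i : ℕ) p := by
  induction hp with
  | mem h =>
    obtain ⟨j, hj, rfl⟩ := h
    intro e he
    have hred : red (X ^ (2 ^ ((j : ℕ) + 1) - 2)) = X ^ (dexp (j : ℕ)) := by
      simp [red, Polynomial.map_pow, dexp]
    rw [hred, coeff_X_pow] at he
    have he' : e = dexp (j : ℕ) := by by_contra hc; simp [hc] at he
    subst he'
    refine ⟨dexp_even _, fun hc => hiB ?_⟩
    have h1 : (j : ℕ) = (i : ℕ) := dexp_strictMono.injective hc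
    have h2 : j = i := PNat.coe_injective h1
    rwa [← h2]
  | zero => intro e he; simp [red] at he
  | @add p q hp hq ihp ihq =>
    intro e he
    have hr : (red (p + q)).coeff e = (red p).coeff e + (red q).coeff e := by
      simp [red]
    rw [hr] at he
    by_cases h1 : (red p).coeff e = 0
    · exact ihq e (by rw [h1, zero_add] at he; exact he)
    · exact ihp e h1
  | @neg p hp ihp =>
    intro e he
    have hr : (red (-p)).coeff e = -(red p).coeff e := by simp [red]
    rw [hr, neg_ne_zero] at he
    exact ihp e he
  | @comp p q hp hq ihp ihq =>
    intro e he
    have hr : red (p.comp q) = (red p).comp (red q) := Polynomial.map_comp _ _ _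
    rw [hr] at he
    have h4 : 4 ∣ e := comp_support_four _ _ (fun n hn => (ihp n hn).1)
      (fun n hn => (ihq n hn).1) e he
    refine ⟨dvd_trans (by norm_num) h4, fun hc => ?_⟩
    subst hc
    exact dexp_not_four _ i.one_le h4

lemma nrgen_mono {S S' : Set (Polynomial ℤ)} (h : S ⊆ S') {p : Polynomial ℤ}
    (hp : NRGen S p) : NRGen S' p := by
  induction hp with
  | mem hm => exact NRGen.mem (h hm)
  | zero => exact NRGen.zero
  | add _ _ ih1 ih2 => exact NRGen.add ih1 ih2
  | neg _ ih => exact NRGen.neg ih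
  | comp _ _ ih1 ih2 => exact NRGen.comp ih1 ih2

lemma phi_subset_iff (A B : Set ℕ+) : Phi A ⊆ Phi B ↔ A ⊆ B := by
  constructor
  · intro h i hiA
    by_contra hiB
    have hx : (X : Polynomial ℤ) ^ (2 ^ ((i : ℕ) + 1) - 2) ∈ Phi A :=
      NRGen.mem ⟨i, hiA, rfl⟩
    have hx' := h hx
    have hgood : Good (i : ℕ) (X ^ (2 ^ ((i : ℕ) + 1) - 2)) := good_of_nrgen hiB hx'
    have hcoeff : (red ((X : Polynomial ℤ) ^ (2 ^ ((i : ℕ) + 1) - 2))).coeff (dexp i) ≠ 0 := by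
      have hred : red ((X : Polynomial ℤ) ^ (2 ^ ((i : ℕ) + 1) - 2)) = X ^ (dexp (i : ℕ)) := by
        simp [red, Polynomial.map_pow, dexp]
      rw [hred, coeff_X_pow, if_pos rfl]
      exact one_ne_zero
    exact (hgood _ hcoeff).2 rfl
  · intro h p hp
    exact nrgen_mono (fun q hq => by obtain ⟨j, hj, rfl⟩ := hq; exact ⟨j, h hj, rfl⟩) hp

lemma isSubNR_phi (A : Set ℕ+) : IsSubNRPoly (Phi A) :=
  ⟨NRGen.zero, fun _ hp _ hq => NRGen.add hp hq, fun _ hp => NRGen.neg hp,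
    fun _ hp _ hq => NRGen.comp hp hq⟩

theorem phi_subset_iff_and_card :
    (∀ A B : Set ℕ+, Phi A ⊆ Phi B ↔ A ⊆ B) ∧
    Function.Injective Phi ∧
    Cardinal.mk {T : Set (Polynomial ℤ) // IsSubNRPoly T} = 2 ^ Cardinal.aleph0 := by
  have hinj : Function.Injective Phi := by
    intro A B hAB
    exact le_antisymm ((phi_subset_iff A B).mp hAB.le) ((phi_subset_iff B A).mp hAB.ge)
  have hmk : Cardinal.mk (Polynomial ℤ) = Cardinal.aleph0 := by
    rw [Polynomial.cardinalMk_eq_max, Cardinal.mk_eq_aleph0 ℤ, max_self]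
  refine ⟨phi_subset_iff, hinj, ?_⟩
  apply le_antisymm
  · calc Cardinal.mk {T : Set (Polynomial ℤ) // IsSubNRPoly T}
        ≤ Cardinal.mk (Set (Polynomial ℤ)) := Cardinal.mk_subtype_le _
      _ = 2 ^ Cardinal.aleph0 := by rw [Cardinal.mk_set, hmk]
  · have hf : Function.Injective
        (fun A : Set ℕ+ =>
          (⟨Phi A, isSubNR_phi A⟩ : {T : Set (Polynomial ℤ) // IsSubNRPoly T})) := by
      intro A B h
      exact hinj (congrArg Subtype.val h)
    calc (2 : Cardinal) ^ Cardinal.aleph0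
        = Cardinal.mk (Set ℕ+) := by rw [Cardinal.mk_set, Cardinal.mk_eq_aleph0]
      _ ≤ Cardinal.mk {T : Set (Polynomial ℤ) // IsSubNRPoly T} :=
          Cardinal.mk_le_of_injective hf
end

section
/- A polynomial p = Σᵢ cᵢxⁱ ∈ ℤ[x] lies in the subnearring of (ℤ[x], +, ∘) generated by {1, x²} if and only if all odd-indexed coefficients vanish and for every i ≥ 1, 2^(s₂(i)−1) divides c_{2i}, where s₂(i) is the binary digit sum of i. -/
open Polynomial Finset

def s2 (n : ℕ) : ℕ := (Nat.digits 2 n).sum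

lemma s2_rec (n : ℕ) : s2 n = n % 2 + s2 (n / 2) := by
  rcases Nat.eq_zero_or_pos n with h | h
  · simp [h, s2]
  · unfold s2
    rw [Nat.digits_def' (by norm_num) h]
    simp

lemma s2_le (n : ℕ) : s2 n ≤ n := Nat.digit_sum_le 2 n

lemma s2_pos {n : ℕ} (h : n ≠ 0) : 1 ≤ s2 n := by
  induction n using Nat.strong_induction_on with
  | _ n ih =>
    rw [s2_rec]
    rcases Nat.even_or_odd n with he | ho
    · have he' := Nat.even_iff.mp he
      have h2 : n / 2 ≠ 0 := by omega
      have := ih (n/2) (by omega) h2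
      omega
    · have := Nat.odd_iff.mp ho
      omega

lemma s2_two_mul (n : ℕ) : s2 (2 * n) = s2 n := by
  rw [s2_rec (2*n)]
  simp [Nat.mul_div_cancel_left, Nat.mul_mod_right]

lemma fact_val (n : ℕ) : padicValNat 2 (Nat.factorial n) = n - s2 n := by
  have := sub_one_mul_padicValNat_factorial (p := 2) n
  simpa [s2] using this

lemma s2_subadd (a b : ℕ) : s2 (a + b) ≤ s2 a + s2 b := by
  have hchoose : (a+b).choose a * Nat.factorial a * Nat.factorial b = Nat.factorial (a+b) := by
    have := Nat.choose_mul_factorial_mul_factorial (Nat.le_add_right a b)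
    simpa using this
  have hv : padicValNat 2 (Nat.factorial (a+b)) =
      padicValNat 2 ((a+b).choose a) + padicValNat 2 (Nat.factorial a)
        + padicValNat 2 (Nat.factorial b) := by
    rw [← hchoose, padicValNat.mul (Nat.mul_ne_zero (Nat.choose_pos (Nat.le_add_right a b)).ne' (Nat.factorial_ne_zero a)) (Nat.factorial_ne_zero b),
      padicValNat.mul (Nat.choose_pos (Nat.le_add_right a b)).ne' (Nat.factorial_ne_zero a)]
  have ha := fact_val a
  have hb := fact_val b
  have hab := fact_val (a+b)
  have la := s2_le a
  have lb := s2_le b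
  have lab := s2_le (a+b)
  omega

lemma s2_pow_add : ∀ t n : ℕ, n < 2^t → s2 (2^t + n) = 1 + s2 n := by
  intro t
  induction t with
  | zero =>
    intro n hn
    interval_cases n
    simp [s2]
  | succ t ih =>
    intro n hn
    have h1 : (2^(t+1) + n) % 2 = n % 2 := by omega
    have h2 : (2^(t+1) + n) / 2 = 2^t + n/2 := by
      have : 2^(t+1) = 2 * 2^t := by ring
      omega
    rw [s2_rec (2^(t+1)+n), h1, h2, ih (n/2) (by omega), s2_rec n]
    ring

lemma s2_pow (t : ℕ) : s2 (2^t) = 1 := by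
  have := s2_pow_add t 0 (by positivity)
  simpa [s2] using this

def Cond (p : Polynomial ℤ) : Prop :=
  (∀ i : ℕ, p.coeff (2 * i + 1) = 0) ∧
    ∀ i : ℕ, 1 ≤ i → (2 : ℤ) ^ (s2 i - 1) ∣ p.coeff (2 * i)

lemma cond_odd {p : Polynomial ℤ} (h : Cond p) {n : ℕ} (hn : n % 2 = 1) : p.coeff n = 0 := by
  have : n = 2 * (n/2) + 1 := by omega
  rw [this]; exact h.1 _

lemma cond_zero : Cond 0 := by simp [Cond]

lemma cond_C (c : ℤ) : Cond (C c) := by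
  constructor
  · intro i; rw [coeff_C]; simp
  · intro i hi
    have h0 : ¬ (2*i = 0) := by omega
    rw [coeff_C, if_neg h0]
    exact dvd_zero _

lemma cond_one : Cond 1 := by simpa using cond_C 1

lemma cond_X2 : Cond (X^2 : Polynomial ℤ) := by
  constructor
  · intro i
    have : ¬ (2*i+1 = 2) := by omega
    simp [coeff_X_pow, this]
  · intro i hi
    rw [coeff_X_pow]
    rcases eq_or_ne i 1 with rfl | h
    · norm_num [s2]
    · have : ¬ (2*i = 2) := by omega
      simp [this]

lemma cond_add {p q : Polynomial ℤ} (hp : Cond p) (hq : Cond q) : Cond (p + q) := by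
  constructor
  · intro i; simp [hp.1 i, hq.1 i]
  · intro i hi; simpa using dvd_add (hp.2 i hi) (hq.2 i hi)

lemma cond_neg {p : Polynomial ℤ} (hp : Cond p) : Cond (-p) := by
  constructor
  · intro i; simp [hp.1 i]
  · intro i hi; simpa using (hp.2 i hi).neg_right

lemma cond_smul {p : Polynomial ℤ} (hp : Cond p) (z : ℤ) : Cond (z • p) := by
  constructor
  · intro i; simp [hp.1 i]
  · intro i hi
    rw [coeff_smul, smul_eq_mul]
    exact Dvd.dvd.mul_left (hp.2 i hi) z

lemma key_dvd {q r : Polynomial ℤ} (hq : Cond q) (hr : Cond r) {a b k : ℕ}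
    (hab : a + b = 2 * k) (hk : 1 ≤ k) :
    (2:ℤ) ^ (s2 k - 1) ∣ 2 * (q.coeff a * r.coeff b) := by
  rcases eq_or_ne (a % 2) 1 with ha | ha
  · rw [cond_odd hq ha, zero_mul, mul_zero]
    exact dvd_zero _
  rcases eq_or_ne (b % 2) 1 with hb | hb
  · rw [cond_odd hr hb, mul_zero, mul_zero]
    exact dvd_zero _
  have hau : a = 2 * (a / 2) := by omega
  have hbv : b = 2 * (b / 2) := by omega
  set u := a / 2 with hu
  set v := b / 2 with hv
  have huv : u + v = k := by omega
  rcases Nat.eq_zero_or_pos u with hu0 | hu1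
  · have hb2 : b = 2 * k := by omega
    rw [hb2]
    exact Dvd.dvd.mul_left (Dvd.dvd.mul_left (hr.2 k hk) _) 2
  rcases Nat.eq_zero_or_pos v with hv0 | hv1
  · have ha2 : a = 2 * k := by omega
    rw [ha2]
    exact Dvd.dvd.mul_left (Dvd.dvd.mul_right (hq.2 k hk) _) 2
  obtain ⟨x, hx⟩ := hq.2 u hu1
  obtain ⟨y, hy⟩ := hr.2 v hv1
  rw [hau, hbv, hx, hy]
  have heq : 2 * (2 ^ (s2 u - 1) * x * (2 ^ (s2 v - 1) * y)) =
      (2:ℤ) ^ ((s2 u - 1) + (s2 v - 1) + 1) * (x * y) := by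
    rw [pow_add, pow_add]; ring
  rw [heq]
  refine dvd_mul_of_dvd_left (pow_dvd_pow 2 ?_) _
  have h1 := s2_subadd u v
  have h2 := s2_pos hu1.ne'
  have h3 := s2_pos hv1.ne'
  rw [huv] at h1
  omega

lemma coeff_mul_odd {q r : Polynomial ℤ} (hq : Cond q) (hr : Cond r) (i : ℕ) :
    (q * r).coeff (2 * i + 1) = 0 := by
  rw [coeff_mul]
  refine Finset.sum_eq_zero ?_
  rintro ⟨a, b⟩ hab
  rw [Finset.HasAntidiagonal.mem_antidiagonal] at hab
  rcases eq_or_ne (a % 2) 1 with ha | ha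
  · rw [cond_odd hq ha, zero_mul]
  · have hb : b % 2 = 1 := by omega
    rw [cond_odd hr hb, mul_zero]

lemma cond_two_mul {q r : Polynomial ℤ} (hq : Cond q) (hr : Cond r) :
    Cond ((2:ℤ) • (q * r)) := by
  constructor
  · intro i
    rw [coeff_smul, coeff_mul_odd hq hr, smul_zero]
  · intro i hi
    rw [coeff_smul, coeff_mul, smul_eq_mul, Finset.mul_sum]
    refine Finset.dvd_sum ?_
    rintro ⟨a, b⟩ hab
    rw [Finset.HasAntidiagonal.mem_antidiagonal] at hab
    exact key_dvd hq hr hab hi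

lemma sum_split (f : ℕ → ℤ) (k : ℕ) (hsym : ∀ a, a ≤ 2*k → f (2*k - a) = f a) :
    ∑ a ∈ range (2*k+1), f a = 2 * (∑ a ∈ range k, f a) + f k := by
  have h1 : ∑ a ∈ Finset.Ico 0 k, f a + ∑ a ∈ Finset.Ico k (2*k+1), f a
      = ∑ a ∈ Finset.Ico 0 (2*k+1), f a :=
    Finset.sum_Ico_consecutive f (Nat.zero_le k) (by omega)
  have h2 : ∑ a ∈ Finset.Ico k (2*k+1), f a = f k + ∑ a ∈ Finset.Ico (k+1) (2*k+1), f a :=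
    Finset.sum_eq_sum_Ico_succ_bot (by omega) f
  have h3 : ∑ a ∈ Finset.Ico (k+1) (2*k+1), f a = ∑ a ∈ range (2*k+1-(k+1)), f (k+1+a) :=
    Finset.sum_Ico_eq_sum_range f (k+1) (2*k+1)
  have hk' : 2*k+1-(k+1) = k := by omega
  rw [hk'] at h3
  have h4 : ∑ a ∈ range k, f (k+1+(k-1-a)) = ∑ a ∈ range k, f (k+1+a) :=
    Finset.sum_range_reflect (fun i => f (k+1+i)) k
  have h5 : ∑ a ∈ range k, f (k+1+(k-1-a)) = ∑ a ∈ range k, f a := by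
    refine Finset.sum_congr rfl ?_
    intro a ha
    rw [Finset.mem_range] at ha
    have : k+1+(k-1-a) = 2*k - a := by omega
    rw [this, hsym a (by omega)]
  rw [← Finset.range_eq_Ico, ← Finset.range_eq_Ico] at h1
  linarith [h1, h2, h3, h4, h5]

lemma cond_sq {q : Polynomial ℤ} (hq : Cond q) : Cond (q * q) := by
  constructor
  · exact coeff_mul_odd hq hq
  · intro k hk
    rw [coeff_mul, Finset.Nat.sum_antidiagonal_eq_sum_range_succ_mk]
    have h2k : 2 * k + 1 = 2*k + 1 := rfl
    rw [sum_split (fun a => q.coeff a * q.coeff (2*k - a)) k ?hsym]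
    case hsym =>
      intro a ha
      have h' : 2*k - (2*k - a) = a := by omega
      show q.coeff (2*k - a) * q.coeff (2*k - (2*k - a)) = q.coeff a * q.coeff (2*k - a)
      rw [h', mul_comm]
    refine dvd_add ?_ ?_
    · rw [Finset.mul_sum]
      refine Finset.dvd_sum ?_
      intro a ha
      rw [Finset.mem_range] at ha
      exact key_dvd hq hq (by omega) hk
    · -- middle term q_k * q_k
      have hmid : 2*k - k = k := by omega
      show (2:ℤ)^(s2 k - 1) ∣ q.coeff k * q.coeff (2*k - k)
      rw [hmid]
      rcases eq_or_ne (k % 2) 1 with hko | hke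
      · rw [cond_odd hq hko, zero_mul]
        exact dvd_zero _
      · have hm1 : 1 ≤ k / 2 := by omega
        obtain ⟨x, hx⟩ := hq.2 (k/2) hm1
        have hm : k = 2 * (k/2) := by omega
        rw [hm, s2_two_mul, hx]
        have h2 := s2_pos (show k/2 ≠ 0 by omega)
        have heq : 2 ^ (s2 (k/2) - 1) * x * (2 ^ (s2 (k/2) - 1) * x) =
            (2:ℤ) ^ ((s2 (k/2) - 1) + (s2 (k/2) - 1)) * (x * x) := by
          rw [pow_add]; ring
        rw [heq]
        exact dvd_mul_of_dvd_left (pow_dvd_pow 2 (by omega)) _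

lemma s2_odd (j : ℕ) : s2 (2 * j + 1) = 1 + s2 j := by
  rw [s2_rec (2*j+1)]
  congr 1
  · omega
  · congr 1; omega

lemma cond_pow : ∀ i : ℕ, 1 ≤ i → ∀ q : Polynomial ℤ, Cond q →
    Cond ((2:ℤ)^(s2 i - 1) • q^(2*i)) := by
  intro i
  induction i using Nat.strong_induction_on with
  | _ i ih =>
    intro hi q hq
    rcases eq_or_ne i 1 with rfl | hne
    · have hs : s2 1 = 1 := by simp [s2]
      rw [hs]
      simpa [pow_two] using cond_sq hq
    rcases eq_or_ne (i % 2) 0 with he | ho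
    · -- i = 2j
      set j := i / 2 with hj
      have hij : i = 2 * j := by omega
      have hj1 : 1 ≤ j := by omega
      have hqq : q ^ (2*i) = (q*q) ^ (2*j) := by
        rw [← pow_two, ← pow_mul]
        congr 1
        omega
      rw [hqq, hij, s2_two_mul]
      exact ih j (by omega) hj1 (q*q) (cond_sq hq)
    · -- i = 2j+1, j ≥ 1
      set j := i / 2 with hj
      have hij : i = 2 * j + 1 := by omega
      have hj1 : 1 ≤ j := by omega
      have hA := ih (2*j) (by omega) (by omega) q hq
      have h2 := cond_two_mul hA (cond_sq hq)
      have heq : (2:ℤ) • (((2:ℤ)^(s2 (2*j) - 1) • q^(2*(2*j))) * (q*q))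
          = (2:ℤ)^(s2 i - 1) • q^(2*i) := by
        rw [smul_mul_assoc, smul_smul]
        have hm : q^(2*(2*j)) * (q*q) = q^(2*i) := by
          rw [show 2*i = 2*(2*j) + 1 + 1 by omega, pow_succ, pow_succ, mul_assoc]
        rw [hm, s2_two_mul]
        congr 1
        rw [hij, s2_odd]
        have := s2_pos (show j ≠ 0 by omega)
        rw [← pow_succ']
        congr 1
        omega
      rw [← heq]
      exact h2

lemma cond_comp {p q : Polynomial ℤ} (hp : Cond p) (hq : Cond q) : Cond (p.comp q) := by
  rw [comp_eq_sum_left, Polynomial.sum_def]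
  refine Finset.sum_induction _ Cond (fun a b => cond_add) cond_zero ?_
  intro n hn
  rw [Polynomial.mem_support_iff] at hn
  rcases eq_or_ne (n % 2) 1 with hno | hne
  · exact absurd (cond_odd hp hno) hn
  have hn2 : n = 2 * (n / 2) := by omega
  set i := n / 2 with hi
  rcases Nat.eq_zero_or_pos i with hi0 | hi1
  · have : n = 0 := by omega
    rw [this, pow_zero, mul_one]
    exact cond_C _
  obtain ⟨t, ht⟩ := hp.2 i hi1
  rw [hn2, ← smul_eq_C_mul, ht, mul_comm, ← smul_smul]
  exact cond_smul (cond_pow i hi1 q hq) t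

theorem fwd {p : Polynomial ℤ} (h : NRGen {1, X ^ 2} p) : Cond p := by
  induction h with
  | mem hmem =>
    rcases hmem with rfl | rfl
    · simpa using cond_C 1
    · exact cond_X2
  | zero => exact cond_zero
  | add _ _ ih1 ih2 => exact cond_add ih1 ih2
  | neg _ ih =>
    constructor
    · intro i; simp [ih.1 i]
    · intro i hi; simpa using (ih.2 i hi).neg_right
  | comp _ _ ih1 ih2 => exact cond_comp ih1 ih2

lemma nr_nsmul {S : Set (Polynomial ℤ)} {p : Polynomial ℤ} (h : NRGen S p) :
    ∀ n : ℕ, NRGen S (n • p) := by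
  intro n
  induction n with
  | zero => simpa using NRGen.zero
  | succ n ih =>
    have := NRGen.add ih h
    rwa [← succ_nsmul] at this

lemma nr_zsmul {S : Set (Polynomial ℤ)} {p : Polynomial ℤ} (h : NRGen S p) (z : ℤ) :
    NRGen S (z • p) := by
  rcases z.natAbs_eq with hz | hz
  · rw [hz, natCast_zsmul]
    exact nr_nsmul h _
  · rw [hz, neg_smul, natCast_zsmul]
    exact NRGen.neg (nr_nsmul h _)

lemma nr_sub {S : Set (Polynomial ℤ)} {p q : Polynomial ℤ} (hp : NRGen S p) (hq : NRGen S q) :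
    NRGen S (p - q) := by
  rw [sub_eq_add_neg]
  exact NRGen.add hp (NRGen.neg hq)

lemma hX2mem : (X^2 : Polynomial ℤ) ∈ ({1, X^2} : Set (Polynomial ℤ)) :=
  Set.mem_insert_of_mem _ rfl

lemma nr_pow2 : ∀ t : ℕ, NRGen {1, X^2} ((X : Polynomial ℤ)^(2^(t+1))) := by
  intro t
  induction t with
  | zero => simpa using NRGen.mem hX2mem
  | succ t ih =>
    have h := NRGen.comp ih (NRGen.mem hX2mem)
    have : ((X : Polynomial ℤ)^(2^(t+1))).comp (X^2) = X^(2^(t+2)) := by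
      rw [pow_comp, X_comp, ← pow_mul]
      congr 1
      ring
    rwa [this] at h

lemma nr_gen : ∀ i : ℕ, 1 ≤ i → NRGen {1, X^2} ((2:ℤ)^(s2 i - 1) • (X : Polynomial ℤ)^(2*i)) := by
  intro i
  induction i using Nat.strong_induction_on with
  | _ i ih =>
    intro hi
    set t := Nat.log 2 i with htdef
    have h2t : 2^t ≤ i := Nat.pow_log_le_self 2 (by omega)
    have hlt : i < 2^(t+1) := Nat.lt_pow_succ_log_self (by norm_num) i
    set n := i - 2^t with hn
    rcases Nat.eq_zero_or_pos n with hn0 | hn1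
    · -- i = 2^t
      have hi2 : i = 2^t := by omega
      have hs : s2 i = 1 := by rw [hi2]; exact s2_pow t
      rw [hs]
      simp only [Nat.sub_self, pow_zero, one_smul]
      have : 2 * i = 2^(t+1) := by rw [hi2]; ring
      rw [this]
      exact nr_pow2 t
    · -- i = 2^t + n, 1 ≤ n < 2^t
      have hnlt : n < 2^t := by omega
      have hin : i = 2^t + n := by omega
      have hsi : s2 i = 1 + s2 n := by rw [hin]; exact s2_pow_add t n hnlt
      have hn2 : 2*n < i := by omega
      set b := (2:ℤ)^(s2 n - 1) with hb
      set A := (X : Polynomial ℤ)^(2^(t+1)) with hA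
      set B := b • (X : Polynomial ℤ)^(2*n) with hB
      have hBmem : NRGen {1, X^2} B := ih n (by omega) (by omega)
      have hsum : NRGen {1, X^2} (A + B) := NRGen.add (nr_pow2 t) hBmem
      have hcompr : ((X:Polynomial ℤ)^2).comp (A+B) = (A+B)^2 := by
        rw [pow_comp, X_comp]
      have hsq : NRGen {1, X^2} ((A+B)^2) := by
        rw [← hcompr]
        exact NRGen.comp (NRGen.mem hX2mem) hsum
      have hDgen : NRGen {1, X^2} ((2:ℤ)^(s2 (2*n) - 1) • (X : Polynomial ℤ)^(2*(2*n))) :=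
        ih (2*n) hn2 (by omega)
      have hD : NRGen {1, X^2} ((b*b) • (X : Polynomial ℤ)^(2*(2*n))) := by
        have := nr_zsmul hDgen ((2:ℤ)^(s2 n - 1))
        rwa [smul_smul, s2_two_mul, ← hb] at this
      have hC : NRGen {1, X^2} ((X : Polynomial ℤ)^(2^(t+2))) := nr_pow2 (t+1)
      have key : (2:ℤ)^(s2 i - 1) • (X : Polynomial ℤ)^(2*i)
          = (A+B)^2 - (X : Polynomial ℤ)^(2^(t+2)) - (b*b) • (X : Polynomial ℤ)^(2*(2*n)) := by
        have hA2 : A^2 = (X : Polynomial ℤ)^(2^(t+2)) := by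
          rw [hA, ← pow_mul, show 2^(t+1)*2 = 2^(t+2) from by ring]
        have hB2 : B^2 = (b*b) • (X : Polynomial ℤ)^(2*(2*n)) := by
          rw [hB, _root_.smul_pow]
          congr 1
          · rw [sq]
          · rw [← pow_mul]
            congr 1
            omega
        have he : 2^(t+1) + 2*n = 2*i := by omega
        have htwo : ∀ Z : Polynomial ℤ, (2 : Polynomial ℤ) * Z = (2:ℤ) • Z := by
          intro Z
          rw [smul_eq_C_mul]
          norm_num
        have hAB : 2*A*B = ((2:ℤ)*b) • (X : Polynomial ℤ)^(2*i) := by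
          rw [mul_assoc, hA, hB, mul_smul_comm, ← pow_add, he, mul_smul_comm, htwo,
            smul_smul, mul_comm b 2]
        have hcb : (2:ℤ)*b = (2:ℤ)^(s2 i - 1) := by
          rw [hb, hsi, ← pow_succ']
          congr 1
          have := s2_pos (show n ≠ 0 by omega)
          omega
        rw [add_sq', hA2, hB2, hAB, hcb]
        ring
      rw [key]
      exact nr_sub (nr_sub hsq hC) hD

lemma nr_C (c : ℤ) : NRGen {1, X^2} (C c : Polynomial ℤ) := by
  have h1 : NRGen {1, X^2} (1 : Polynomial ℤ) := NRGen.mem (Set.mem_insert _ _)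
  have := nr_zsmul h1 c
  rwa [smul_eq_C_mul, mul_one] at this

lemma cond_monomial (i : ℕ) : Cond ((2:ℤ)^(s2 i - 1) • (X : Polynomial ℤ)^(2*i)) := by
  constructor
  · intro j
    rw [coeff_smul, coeff_X_pow, if_neg (by omega), smul_zero]
  · intro j hj
    rw [coeff_smul, coeff_X_pow, smul_eq_mul]
    rcases eq_or_ne j i with rfl | hne
    · simp
    · rw [if_neg (by omega), mul_zero]
      exact dvd_zero _

lemma bwd : ∀ d : ℕ, ∀ p : Polynomial ℤ, p.natDegree ≤ d → Cond p → NRGen {1, X^2} p := by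
  intro d
  induction d with
  | zero =>
    intro p hd hc
    rw [Polynomial.eq_C_of_natDegree_le_zero hd]
    exact nr_C _
  | succ d ih =>
    intro p hd hc
    rcases eq_or_ne (d % 2) 0 with hpar | hpar
    · -- d+1 odd, so coeff (d+1) = 0
      have h0 : p.coeff (d+1) = 0 := by
        have : d + 1 = 2 * (d/2) + 1 := by omega
        rw [this]
        exact hc.1 _
      have hle : p.natDegree ≤ d := by
        rw [Polynomial.natDegree_le_iff_coeff_eq_zero] at hd ⊢
        intro m hm
        rcases eq_or_ne m (d+1) with rfl | hne
        · exact h0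
        · exact hd m (by omega)
      exact ih p hle hc
    · -- d+1 = 2*i, i ≥ 1
      obtain ⟨i, hi2⟩ : ∃ i, d + 1 = 2 * i := ⟨(d+1)/2, by omega⟩
      have hi1 : 1 ≤ i := by omega
      obtain ⟨t, ht⟩ := hc.2 i hi1
      set M := (2:ℤ)^(s2 i - 1) • (X : Polynomial ℤ)^(2*i) with hM
      set r := p - t • M with hr
      have hrc : Cond r := cond_add hc (cond_neg (cond_smul (cond_monomial i) t))
      have hMco : ∀ m : ℕ, (t • M).coeff m = if m = 2*i then 2^(s2 i - 1) * t else 0 := by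
        intro m
        rw [hM, coeff_smul, coeff_smul, coeff_X_pow]
        rcases eq_or_ne m (2*i) with rfl | hne
        · simp [mul_comm]
        · simp [hne]
      have hrd : r.natDegree ≤ d := by
        rw [Polynomial.natDegree_le_iff_coeff_eq_zero] at hd ⊢
        intro m hm
        rw [hr, Polynomial.coeff_sub, hMco m]
        rcases eq_or_ne m (d+1) with rfl | hne
        · rw [if_pos hi2, show p.coeff (d+1) = p.coeff (2*i) from by rw [hi2], ht]
          ring
        · rw [if_neg (by omega), hd m (by omega), sub_zero]
      have hrg : NRGen {1, X^2} r := ih r hrd hrc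
      have : p = r + t • M := by rw [hr]; ring
      rw [this]
      exact NRGen.add hrg (nr_zsmul (nr_gen i hi1) t)

theorem mem_gen_1_x2 (p : Polynomial ℤ) :
    NRGen {1, X ^ 2} p ↔
      (∀ i : ℕ, p.coeff (2 * i + 1) = 0) ∧
        ∀ i : ℕ, 1 ≤ i → (2 : ℤ) ^ ((Nat.digits 2 i).sum - 1) ∣ p.coeff (2 * i) := by
  constructor
  · intro h
    exact fwd h
  · intro hc
    exact bwd p.natDegree p le_rfl hc
end
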